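/- Let f be nonnegative and Riemann integrable on [a,b], let K be a fixed natural number, and let d_{n,k} ≥ 0 satisfy (max_{1≤k≤n} d_{n,k})/n → 0 as n → ∞. Then lim_{n→∞} Σ_{k=K+1}^{n} f(a + (k/n)(b−a)) · (b−a)/(n + d_{n,k}) = ∫_a^b f(x) dx. -/

import Mathlib

open Filter Finset Real

/-- `f` is Riemann integrable on `[a,b]` with Riemann integral `I`:
for every `ε > 0` there is `δ > 0` such that every tagged partition
`a = x 0 < x 1 < … < x n = b` with mesh `< δ` and tags `ξ k ∈ [x (k-1), x k]`
has Riemann sum within `ε` of `I`. -/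
def IsRiemannIntegral (f : ℝ → ℝ) (a b I : ℝ) : Prop :=
  ∀ ε > 0, ∃ δ > 0, ∀ (n : ℕ) (x ξ : ℕ → ℝ),
    0 < n → x 0 = a → x n = b →
    (∀ k ∈ Finset.Icc 1 n, x (k - 1) < x k) →
    (∀ k ∈ Finset.Icc 1 n, x k - x (k - 1) < δ) →
    (∀ k ∈ Finset.Icc 1 n, ξ k ∈ Set.Icc (x (k - 1)) (x k)) →
    |(∑ k ∈ Finset.Icc 1 n, f (ξ k) * (x k - x (k - 1))) - I| < ε

lemma unif_step {a b : ℝ} {n : ℕ} (hn : (0:ℝ) < n) (k : ℕ) (hk : 1 ≤ k) :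
    (a + (k:ℝ)/n*(b-a)) - (a + ((k-1:ℕ):ℝ)/n*(b-a)) = (b-a)/n := by
  have h1 : ((k-1:ℕ):ℝ) = (k:ℝ) - 1 := by rw [Nat.cast_sub hk]; push_cast; ring
  rw [h1]; field_simp; ring

lemma unif_mem {a b : ℝ} (hab : a ≤ b) {n k : ℕ} (hn : (0:ℝ) < n) (hk : k ≤ n) :
    a + (k:ℝ)/n*(b-a) ∈ Set.Icc a b := by
  have h0 : 0 ≤ (k:ℝ)/n := by positivity
  have h1 : (k:ℝ)/n ≤ 1 := by
    rw [div_le_one hn]; exact_mod_cast hk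
  constructor <;> nlinarith

lemma exists_bound {f : ℝ → ℝ} {a b I : ℝ} (hab : a < b)
    (hf : IsRiemannIntegral f a b I) :
    ∃ M : ℝ, 0 ≤ M ∧ ∀ t ∈ Set.Icc a b, f t ≤ M := by
  have hba : (0:ℝ) < b - a := sub_pos.mpr hab
  obtain ⟨δ, hδ0, H⟩ := hf 1 one_pos
  obtain ⟨n, hn'⟩ := exists_nat_gt (max 1 ((b - a)/δ))
  have hn1 : (1:ℝ) ≤ n := le_of_lt (lt_of_le_of_lt (le_max_left _ _) hn')
  have hnR : (0:ℝ) < n := by linarith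
  have hn0 : 0 < n := by exact_mod_cast lt_of_lt_of_le zero_lt_one hn1
  have hmesh : (b - a)/n < δ := by
    rw [div_lt_iff₀ hnR]
    have h2 : (b-a)/δ < n := lt_of_le_of_lt (le_max_right _ _) hn'
    rw [div_lt_iff₀ hδ0] at h2; linarith
  set x : ℕ → ℝ := fun k => a + (k:ℝ)/n*(b-a) with hxdef
  clear_value x
  have hx0 : x 0 = a := by simp [hxdef]
  have hxn : x n = b := by
    simp only [hxdef]
    field_simp; ring
  have hstep : ∀ k ∈ Finset.Icc 1 n, x k - x (k-1) = (b-a)/n := by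
    intro k hk
    simp only [hxdef]
    exact unif_step hnR k (Finset.mem_Icc.mp hk).1
  have hlt : ∀ k ∈ Finset.Icc 1 n, x (k-1) < x k := by
    intro k hk
    have h := hstep k hk
    have h2 : (0:ℝ) < (b-a)/(n:ℝ) := div_pos hba hnR
    linarith [h, h2]
  have hmesh' : ∀ k ∈ Finset.Icc 1 n, x k - x (k-1) < δ := by
    intro k hk; rw [hstep k hk]; exact hmesh
  have htag : ∀ k ∈ Finset.Icc 1 n, x k ∈ Set.Icc (x (k-1)) (x k) := by
    intro k hk; exact ⟨le_of_lt (hlt k hk), le_refl _⟩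
  have hA := H n x x hn0 hx0 hxn hlt hmesh' htag
  refine ⟨(∑ j ∈ Finset.Icc 1 n, |f (x j)|) + 2*n/(b-a), ?_, ?_⟩
  · have h1 : (0:ℝ) ≤ ∑ j ∈ Finset.Icc 1 n, |f (x j)| :=
      Finset.sum_nonneg fun j _ => abs_nonneg _
    have h2 : (0:ℝ) ≤ 2*n/(b-a) := by positivity
    linarith
  intro t ht
  set c : ℝ := (t - a)*n/(b-a) with hcdef
  have hc0 : 0 ≤ c := by
    apply div_nonneg _ (le_of_lt hba)
    nlinarith [ht.1]
  have hcn : c ≤ n := by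
    rw [hcdef, div_le_iff₀ hba]
    nlinarith [ht.2]
  set k : ℕ := max 1 (⌈c⌉.toNat) with hkdef
  have hk1 : 1 ≤ k := le_max_left _ _
  have hcnn : (0:ℤ) ≤ ⌈c⌉ := Int.ceil_nonneg hc0
  have hkn : k ≤ n := by
    apply max_le hn0
    rw [Int.toNat_le]
    apply Int.ceil_le.mpr
    exact_mod_cast hcn
  have h2 : ((⌈c⌉.toNat : ℕ):ℝ) = (⌈c⌉:ℝ) := by exact_mod_cast Int.toNat_of_nonneg hcnn
  have hck : c ≤ (k:ℝ) := by
    have h1 : c ≤ (⌈c⌉:ℝ) := Int.le_ceil c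
    have h3 : ((⌈c⌉.toNat:ℕ):ℝ) ≤ (k:ℝ) := by exact_mod_cast le_max_right 1 _
    linarith
  have hkc : (k:ℝ) - 1 ≤ c := by
    rcases le_or_gt (⌈c⌉.toNat) 1 with h | h
    · have hk1' : k = 1 := by omega
      rw [hk1']; simpa using hc0
    · have hk' : k = ⌈c⌉.toNat := by omega
      have h4 := Int.ceil_lt_add_one c
      rw [hk', h2]
      linarith
  have hcast : ((k-1:ℕ):ℝ) = (k:ℝ) - 1 := by rw [Nat.cast_sub hk1]; push_cast; ring
  have hteq : t = a + c/n*(b-a) := by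
    rw [hcdef]; field_simp; ring
  have htm : t ∈ Set.Icc (x (k-1)) (x k) := by
    constructor
    · show x (k-1) ≤ t
      simp only [hxdef]
      rw [hcast, hteq]
      have : ((k:ℝ)-1)/n*(b-a) ≤ c/n*(b-a) := by gcongr
      linarith
    · show t ≤ x k
      simp only [hxdef]
      rw [hteq]
      have : c/n*(b-a) ≤ (k:ℝ)/n*(b-a) := by gcongr
      linarith
  set ξ' : ℕ → ℝ := Function.update x k t with hξdef
  have htag' : ∀ j ∈ Finset.Icc 1 n, ξ' j ∈ Set.Icc (x (j-1)) (x j) := by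
    intro j hj
    by_cases hjk : j = k
    · subst hjk; simp only [hξdef, Function.update_self]; exact htm
    · simp only [hξdef, Function.update_of_ne hjk]; exact htag j hj
  have hB := H n x ξ' hn0 hx0 hxn hlt hmesh' htag'
  have hkmem : k ∈ Finset.Icc 1 n := Finset.mem_Icc.mpr ⟨hk1, hkn⟩
  have hfun : (fun j => f (ξ' j) * (x j - x (j-1))) =
      Function.update (fun j => f (x j) * (x j - x (j-1))) k (f t * (x k - x (k-1))) := by
    funext j
    by_cases hjk : j = k
    · subst hjk; simp [hξdef]
    · simp [hξdef, Function.update_of_ne hjk]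
  have hsum' : ∑ j ∈ Finset.Icc 1 n, f (ξ' j) * (x j - x (j-1)) =
      f t * (x k - x (k-1)) + ∑ j ∈ Finset.Icc 1 n \ {k}, f (x j) * (x j - x (j-1)) := by
    rw [hfun, Finset.sum_update_of_mem hkmem]
  have hsum : ∑ j ∈ Finset.Icc 1 n, f (x j) * (x j - x (j-1)) =
      f (x k) * (x k - x (k-1)) + ∑ j ∈ Finset.Icc 1 n \ {k}, f (x j) * (x j - x (j-1)) := by
    rw [← Finset.erase_eq]
    exact (Finset.add_sum_erase _ _ hkmem).symm
  have hd2 : f t * ((b-a)/n) - f (x k) * ((b-a)/n) < 2 := by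
    have e1 : f t * ((b-a)/n) - f (x k) * ((b-a)/n) =
        (∑ j ∈ Finset.Icc 1 n, f (ξ' j) * (x j - x (j-1))) -
        (∑ j ∈ Finset.Icc 1 n, f (x j) * (x j - x (j-1))) := by
      rw [hsum', hsum, hstep k hkmem]; ring
    rw [e1]
    have := abs_lt.mp hA
    have := abs_lt.mp hB
    linarith [this.1, this.2]
  have hft : f t ≤ f (x k) + 2*n/(b-a) := by
    have hpos : (0:ℝ) < (b-a)/n := div_pos hba hnR
    have h7 : f t - f (x k) < 2 / ((b-a)/n) := (lt_div_iff₀ hpos).mpr (by linarith)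
    rw [div_div_eq_mul_div] at h7
    linarith
  have h6 : f (x k) ≤ ∑ j ∈ Finset.Icc 1 n, |f (x j)| :=
    le_trans (le_abs_self _) (Finset.single_le_sum (f := fun j => |f (x j)|) (fun j _ => abs_nonneg _) hkmem)
  linarith

set_option maxHeartbeats 1000000 in
theorem deleting_item_disturbing_mesh (f : ℝ → ℝ) (a b I : ℝ) (hab : a < b) (K : ℕ)
    (hf : IsRiemannIntegral f a b I)
    (hpos : ∀ x ∈ Set.Icc a b, 0 ≤ f x)
    (d : ℕ → ℕ → ℝ)
    (hd0 : ∀ n : ℕ, ∀ k ∈ Finset.Icc 1 n, 0 ≤ d n k)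
    (hd : ∀ ε > 0, ∃ N : ℕ, ∀ n ≥ N, ∀ k ∈ Finset.Icc 1 n, d n k / n < ε) :
    Tendsto (fun n : ℕ =>
      ∑ k ∈ Finset.Icc (K + 1) n, f (a + (k : ℝ) / n * (b - a)) * ((b - a) / (n + d n k)))
      atTop (nhds I) := by
  obtain ⟨M, hM0, hM⟩ := exists_bound hab hf
  have hba : (0:ℝ) < b - a := sub_pos.mpr hab
  rw [Metric.tendsto_atTop]
  intro ε hε
  obtain ⟨δ, hδ0, H⟩ := hf (ε/3) (by positivity)
  obtain ⟨N1, hN1⟩ := exists_nat_gt ((b-a)/δ)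
  set η : ℝ := ε/(3*(M*(b-a)+1)) with hηdef
  have hη0 : 0 < η := by positivity
  clear_value η
  obtain ⟨N2, hN2⟩ := hd η hη0
  obtain ⟨N3, hN3⟩ := exists_nat_gt (3*K*M*(b-a)/ε)
  refine ⟨max (max N1 N2) (max N3 1), fun n hn => ?_⟩
  have hnN1 : N1 ≤ n := le_trans (le_trans (le_max_left _ _) (le_max_left _ _)) hn
  have hnN2 : N2 ≤ n := le_trans (le_trans (le_max_right _ _) (le_max_left _ _)) hn
  have hnN3 : N3 ≤ n := le_trans (le_trans (le_max_left _ _) (le_max_right _ _)) hn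
  have hn0 : 0 < n := le_trans (le_trans (le_max_right _ _) (le_max_right _ _)) hn
  have hnR : (0:ℝ) < n := by exact_mod_cast hn0
  have hmesh : (b - a)/n < δ := by
    rw [div_lt_iff₀ hnR]
    have h2 : (b-a)/δ < n := lt_of_lt_of_le hN1 (by exact_mod_cast hnN1)
    rw [div_lt_iff₀ hδ0] at h2; linarith
  set x : ℕ → ℝ := fun k => a + (k:ℝ)/n*(b-a) with hxdef
  clear_value x
  have hx0 : x 0 = a := by simp [hxdef]
  have hxn : x n = b := by simp only [hxdef]; field_simp; ring
  have hstep : ∀ k ∈ Finset.Icc 1 n, x k - x (k-1) = (b-a)/n := by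
    intro k hk
    simp only [hxdef]
    exact unif_step hnR k (Finset.mem_Icc.mp hk).1
  have hlt : ∀ k ∈ Finset.Icc 1 n, x (k-1) < x k := by
    intro k hk
    have h := hstep k hk
    have h2 : (0:ℝ) < (b-a)/(n:ℝ) := div_pos hba hnR
    linarith
  have hmesh' : ∀ k ∈ Finset.Icc 1 n, x k - x (k-1) < δ := by
    intro k hk; rw [hstep k hk]; exact hmesh
  have htag : ∀ k ∈ Finset.Icc 1 n, x k ∈ Set.Icc (x (k-1)) (x k) := by
    intro k hk; exact ⟨le_of_lt (hlt k hk), le_refl _⟩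
  have hmem : ∀ k ∈ Finset.Icc 1 n, x k ∈ Set.Icc a b := by
    intro k hk
    simp only [hxdef]
    exact unif_mem (le_of_lt hab) hnR (Finset.mem_Icc.mp hk).2
  have hRI := H n x x hn0 hx0 hxn hlt hmesh' htag
  set R : ℝ := ∑ k ∈ Finset.Icc 1 n, f (x k) * ((b-a)/n) with hRdef
  clear_value R
  have hR' : ∑ k ∈ Finset.Icc 1 n, f (x k) * (x k - x (k-1)) = R := by
    rw [hRdef]
    exact Finset.sum_congr rfl fun k hk => by rw [hstep k hk]
  rw [hR'] at hRI
  set S : ℝ := ∑ k ∈ Finset.Icc (K+1) n, f (x k) * ((b-a)/(n + d n k)) with hSdef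
  set S' : ℝ := ∑ k ∈ Finset.Icc 1 n, f (x k) * ((b-a)/(n + d n k)) with hS'def
  clear_value S S'
  have hsub : Finset.Icc (K+1) n ⊆ Finset.Icc 1 n := by
    intro k hk
    simp only [Finset.mem_Icc] at *
    omega
  have hdk : ∀ k ∈ Finset.Icc 1 n, 0 ≤ d n k := hd0 n
  have hfx : ∀ k ∈ Finset.Icc 1 n, 0 ≤ f (x k) ∧ f (x k) ≤ M := by
    intro k hk
    exact ⟨hpos _ (hmem k hk), hM _ (hmem k hk)⟩
  -- S' - S bound
  have h1 : S' - S = ∑ k ∈ Finset.Icc 1 n \ Finset.Icc (K+1) n, f (x k) * ((b-a)/(n + d n k)) := by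
    rw [hS'def, hSdef]
    exact (Finset.sum_sdiff_eq_sub hsub).symm
  have hterm_nonneg : ∀ k ∈ Finset.Icc 1 n, 0 ≤ f (x k) * ((b-a)/(n + d n k)) := by
    intro k hk
    have h2 := hdk k hk
    have := (hfx k hk).1
    have h3 : (0:ℝ) < n + d n k := by linarith
    positivity
  have hterm_le : ∀ k ∈ Finset.Icc 1 n, f (x k) * ((b-a)/(n + d n k)) ≤ M * ((b-a)/n) := by
    intro k hk
    have h2 := hdk k hk
    have h3 : (0:ℝ) < n + d n k := by linarith
    have h4 : (b-a)/(n + d n k) ≤ (b-a)/n := by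
      apply div_le_div_of_nonneg_left (le_of_lt hba) hnR
      linarith
    have h5 := (hfx k hk).1
    have h6 := (hfx k hk).2
    have h7 : (0:ℝ) ≤ (b-a)/(n + d n k) := by positivity
    calc f (x k) * ((b-a)/(n + d n k)) ≤ M * ((b-a)/(n + d n k)) := by
          exact mul_le_mul_of_nonneg_right h6 h7
      _ ≤ M * ((b-a)/n) := by exact mul_le_mul_of_nonneg_left h4 hM0
  have hcard : ((Finset.Icc 1 n \ Finset.Icc (K+1) n).card : ℝ) ≤ K := by
    have hss : Finset.Icc 1 n \ Finset.Icc (K+1) n ⊆ Finset.Icc 1 K := by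
      intro k hk
      simp only [Finset.mem_sdiff, Finset.mem_Icc, not_and, not_le] at hk
      simp only [Finset.mem_Icc]
      omega
    have := Finset.card_le_card hss
    have h8 : (Finset.Icc 1 K).card = K := by rw [Nat.card_Icc]; omega
    exact_mod_cast le_trans this (le_of_eq h8)
  have h2 : S' - S ≤ K * (M * ((b-a)/n)) := by
    rw [h1]
    calc ∑ k ∈ Finset.Icc 1 n \ Finset.Icc (K+1) n, f (x k) * ((b-a)/(n + d n k))
        ≤ ∑ k ∈ Finset.Icc 1 n \ Finset.Icc (K+1) n, M * ((b-a)/n) := by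
          apply Finset.sum_le_sum
          intro k hk
          exact hterm_le k (Finset.mem_sdiff.mp hk).1
      _ = ((Finset.Icc 1 n \ Finset.Icc (K+1) n).card : ℝ) * (M * ((b-a)/n)) := by
          rw [Finset.sum_const, nsmul_eq_mul]
      _ ≤ K * (M * ((b-a)/n)) := by
          apply mul_le_mul_of_nonneg_right hcard
          positivity
  have h3 : 0 ≤ S' - S := by
    rw [h1]
    apply Finset.sum_nonneg
    intro k hk
    exact hterm_nonneg k (Finset.mem_sdiff.mp hk).1
  -- R - S' bound
  have h4 : R - S' = ∑ k ∈ Finset.Icc 1 n, (f (x k) * ((b-a)/n) - f (x k) * ((b-a)/(n + d n k))) := by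
    rw [hRdef, hS'def, Finset.sum_sub_distrib]
  have h5 : 0 ≤ R - S' := by
    rw [h4]
    apply Finset.sum_nonneg
    intro k hk
    have hdk2 := hdk k hk
    have h6 : (0:ℝ) < n + d n k := by linarith
    have h7 : (b-a)/(n + d n k) ≤ (b-a)/n := by
      apply div_le_div_of_nonneg_left (le_of_lt hba) hnR
      linarith
    have h8 := (hfx k hk).1
    nlinarith
  have h6 : R - S' ≤ M * (b-a) * η := by
    rw [h4]
    calc ∑ k ∈ Finset.Icc 1 n, (f (x k) * ((b-a)/n) - f (x k) * ((b-a)/(n + d n k)))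
        ≤ ∑ k ∈ Finset.Icc 1 n, M * (b-a) * η / n := by
          apply Finset.sum_le_sum
          intro k hk
          have hdk2 := hdk k hk
          have hdη : d n k / n < η := hN2 n hnN2 k hk
          have hdη' : d n k < η * n := by
            rw [div_lt_iff₀ hnR] at hdη; linarith
          have hpos2 : (0:ℝ) < n + d n k := by linarith
          have key : (b-a)/n - (b-a)/(n + d n k) ≤ (b-a)*η/n := by
            have e1 : (b-a)/n - (b-a)/(n + d n k) = (b-a)*(d n k)/((n:ℝ)*(n + d n k)) := by
              field_simp
              ring
            rw [e1]
            calc (b-a)*(d n k)/((n:ℝ)*(n + d n k)) ≤ (b-a)*(η*n)/((n:ℝ)*(n:ℝ)) := by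
                  apply div_le_div₀ (by positivity) (by nlinarith) (by positivity) (by nlinarith)
              _ = (b-a)*η/n := by field_simp
          have h8 := (hfx k hk).1
          have h9 := (hfx k hk).2
          calc f (x k) * ((b-a)/n) - f (x k) * ((b-a)/(n + d n k))
              = f (x k) * ((b-a)/n - (b-a)/(n + d n k)) := by ring
            _ ≤ M * ((b-a)*η/n) := by
                apply mul_le_mul h9 key ?_ hM0
                have h10 : (b-a)/(n + d n k) ≤ (b-a)/n := by
                  apply div_le_div_of_nonneg_left (le_of_lt hba) hnR; linarith
                linarith
            _ = M * (b-a) * η / n := by ring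
      _ = n * (M * (b-a) * η / n) := by
          rw [Finset.sum_const, Nat.card_Icc, Nat.add_sub_cancel, nsmul_eq_mul]
      _ = M * (b-a) * η := by field_simp
  -- combine
  have hη2 : M * (b-a) * η < ε/3 := by
    rw [hηdef]
    have he : M*(b-a)*(ε/(3*(M*(b-a)+1))) = (M*(b-a)*ε)/(3*(M*(b-a)+1)) := by ring
    rw [he, div_lt_div_iff₀ (by positivity) (by norm_num)]
    nlinarith [mul_nonneg hM0 (le_of_lt hba)]
  have hK2 : (K:ℝ) * (M * ((b-a)/n)) < ε/3 := by
    have h7 : 3*K*M*(b-a)/ε < (n:ℝ) := lt_of_lt_of_le hN3 (by exact_mod_cast hnN3)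
    rw [div_lt_iff₀ hε] at h7
    have : (K:ℝ) * (M * ((b-a)/n)) = K*M*(b-a)/n := by ring
    rw [this, div_lt_iff₀ hnR]
    linarith
  have hfinal : |S - I| < ε := by
    have hRS : 0 ≤ R - S := by linarith
    have hRS2 : R - S < 2*ε/3 := by linarith
    have := abs_lt.mp hRI
    rw [abs_lt]
    constructor <;> linarith [this.1, this.2]
  show dist _ I < ε
  rw [Real.dist_eq]
  have hgoal : (∑ k ∈ Finset.Icc (K + 1) n, f (a + (k : ℝ) / n * (b - a)) * ((b - a) / (n + d n k))) = S := by
    rw [hSdef]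
    apply Finset.sum_congr rfl
    intro k hk
    simp only [hxdef]
  rw [hgoal]
  exact hfinal
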